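/- Let q be a self-join-free Boolean conjunctive query, X a set of variables of q, and G an R-atom of q such that G attacks no variable of X. Let r be a repair satisfying q, A ∈ r an R-fact relevant for q in r, B key-equal to A, and r_B = (r \ {A}) ∪ {B}. Then for every valuation ζ over X, if r_B ⊨ ζ(q) then r ⊨ ζ(q). -/

import Mathlib

/-- A fact `R(a₁,…,aₙ)`: relation name, primary-key values, non-key values. -/
structure DBFact where
  rel : ℕ
  key : List ℕ
  rest : List ℕ
deriving DecidableEq

/-- Two facts are key-equal if they have the same relation name and primary-key value. -/
def keyEq (A B : DBFact) : Prop := A.rel = B.rel ∧ A.key = B.key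

instance (A B : DBFact) : Decidable (keyEq A B) :=
  inferInstanceAs (Decidable (_ ∧ _))

/-- A set of facts is consistent if it contains no two distinct key-equal facts. -/
def Consistent (s : Finset DBFact) : Prop := ∀ A ∈ s, ∀ B ∈ s, keyEq A B → A = B

/-- A repair of `db` is a maximal (w.r.t. ⊆) consistent subset of `db`. -/
def Repair (db r : Finset DBFact) : Prop :=
  r ⊆ db ∧ Consistent r ∧ ∀ r', r' ⊆ db → Consistent r' → r ⊆ r' → r = r'

/-- A term is a variable (inl) or a constant (inr). -/
abbrev Term := ℕ ⊕ ℕ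

/-- An atom `R(t₁,…,tₙ)` with key positions and non-key positions. -/
structure Atom where
  rel : ℕ
  key : List Term
  rest : List Term
deriving DecidableEq

def termVars (l : List Term) : Finset ℕ := (l.filterMap fun t => t.getLeft?).toFinset

/-- Variables at primary-key positions of an atom. -/
def keyVars (F : Atom) : Finset ℕ := termVars F.key

/-- All variables of an atom. -/
def atomVars (F : Atom) : Finset ℕ := termVars F.key ∪ termVars F.rest

/-- A query (finite set of atoms) is self-join-free: no relation name occurs twice. -/
def SJF (q : Finset Atom) : Prop := ∀ F ∈ q, ∀ G ∈ q, F.rel = G.rel → F = G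

/-- Apply a valuation (total map from variables to constants) to an atom, yielding a fact. -/
def applyVal (θ : ℕ → ℕ) (F : Atom) : DBFact :=
  ⟨F.rel, F.key.map (Sum.elim θ id), F.rest.map (Sum.elim θ id)⟩

/-- Semantic implication of a functional dependency `X → Y` by a set of FDs
(two-tuple semantics, which is equivalent to the standard one for FDs). -/
def FDImplies (fds : Set (Set ℕ × Set ℕ)) (X Y : Set ℕ) : Prop :=
  ∀ θ μ : ℕ → ℕ,
    (∀ p ∈ fds, (∀ v ∈ p.1, θ v = μ v) → ∀ v ∈ p.2, θ v = μ v) →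
    (∀ v ∈ X, θ v = μ v) → ∀ v ∈ Y, θ v = μ v

/-- `FD(q) = { key(F) → vars(F) : F ∈ q }`. -/
def FDs (q : Finset Atom) : Set (Set ℕ × Set ℕ) :=
  {p | ∃ F ∈ q, p = ((keyVars F : Set ℕ), (atomVars F : Set ℕ))}

/-- `F⁺ = { x : FD(q \ {F}) ⊨ key(F) → x }`. -/
def plus (q : Finset Atom) (F : Atom) : Set ℕ :=
  {x | FDImplies (FDs (q.erase F)) (keyVars F : Set ℕ) {x}}

/-- One step of a witness for an attack by `F`: consecutive atoms share a variable outside `F⁺`. -/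
def AttackStep (q : Finset Atom) (F : Atom) (A B : Atom) : Prop :=
  ¬ ((atomVars A ∩ atomVars B : Finset ℕ) : Set ℕ) ⊆ plus q F

/-- `F` attacks `G` in the attack graph of `q`. -/
def Attacks (q : Finset Atom) (F G : Atom) : Prop :=
  F ≠ G ∧ F ∈ q ∧ ∃ L : List Atom, (∀ A ∈ L, A ∈ q) ∧
    List.Chain (AttackStep q F) F L ∧ (F :: L).getLast (List.cons_ne_nil F L) = G

/-- `F` attacks the variable `z`. -/
def AttacksVar (q : Finset Atom) (F : Atom) (z : ℕ) : Prop :=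
  z ∉ plus q F ∧ F ∈ q ∧ ∃ L : List Atom, (∀ A ∈ L, A ∈ q) ∧
    List.Chain (AttackStep q F) F L ∧ z ∈ atomVars ((F :: L).getLast (List.cons_ne_nil F L))

/-- `r ⊨ ζ(q)` for a valuation `ζ` over the variable set `X`. -/
def Sat (r : Finset DBFact) (q : Finset Atom) (X : Finset ℕ) (ζ : ℕ → ℕ) : Prop :=
  ∃ θ : ℕ → ℕ, (∀ v ∈ X, θ v = ζ v) ∧ ∀ F ∈ q, applyVal θ F ∈ r

/-- `r ⊨ q`. -/
def Sat0 (r : Finset DBFact) (q : Finset Atom) : Prop :=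
  ∃ θ : ℕ → ℕ, ∀ F ∈ q, applyVal θ F ∈ r

/-- A fact `A` is relevant for `q` in `r` if `A ∈ θ(q) ⊆ r` for some valuation `θ`. -/
def Relevant (A : DBFact) (q : Finset Atom) (r : Finset DBFact) : Prop :=
  ∃ θ : ℕ → ℕ, (∃ F ∈ q, applyVal θ F = A) ∧ ∀ F ∈ q, applyVal θ F ∈ r

lemma mem_termVars {v : ℕ} {l : List Term} : v ∈ termVars l ↔ Sum.inl v ∈ l := by
  simp only [termVars, List.mem_toFinset, List.mem_filterMap]
  constructor
  · rintro ⟨t, ht, h⟩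
    cases t with
    | inl a => simp only [Sum.getLeft?] at h; cases h; exact ht
    | inr b => simp [Sum.getLeft?] at h
  · intro h
    exact ⟨Sum.inl v, h, rfl⟩

lemma map_agree {θ ν : ℕ → ℕ} {l : List Term}
    (h : l.map (Sum.elim θ id) = l.map (Sum.elim ν id)) :
    ∀ v ∈ termVars l, θ v = ν v := by
  rw [List.map_eq_map_iff] at h
  intro v hv
  simpa using h _ (mem_termVars.mp hv)

lemma map_eq_of_agree {θ ν : ℕ → ℕ} {l : List Term}
    (h : ∀ v ∈ termVars l, θ v = ν v) :
    l.map (Sum.elim θ id) = l.map (Sum.elim ν id) := by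
  rw [List.map_eq_map_iff]
  intro t ht
  cases t with
  | inl v => simpa using h v (mem_termVars.mpr ht)
  | inr c => rfl

lemma applyVal_eq_of_agree {θ ν : ℕ → ℕ} {F : Atom}
    (h : ∀ v ∈ atomVars F, θ v = ν v) : applyVal θ F = applyVal ν F := by
  unfold applyVal
  congr 1
  · exact map_eq_of_agree (fun v hv => h v (Finset.mem_union_left _ hv))
  · exact map_eq_of_agree (fun v hv => h v (Finset.mem_union_right _ hv))

lemma agree_of_applyVal_eq {θ ν : ℕ → ℕ} {F : Atom}
    (h : applyVal θ F = applyVal ν F) : ∀ v ∈ atomVars F, θ v = ν v := by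
  unfold applyVal at h
  injection h with h1 h2 h3
  intro v hv
  rcases Finset.mem_union.mp hv with hv | hv
  · exact map_agree h2 v hv
  · exact map_agree h3 v hv

lemma chain_snoc {α : Type*} {R : α → α → Prop} :
    ∀ {l : List α} {a b : α}, List.Chain R a l →
      R ((a :: l).getLast (List.cons_ne_nil a l)) b → List.Chain R a (l ++ [b])
  | [], a, b, _, h => List.Chain.cons (by simpa using h) List.Chain.nil
  | c :: l, a, b, hch, h => by
    obtain ⟨hac, hcl⟩ := List.isChain_cons_cons.mp hch
    exact List.Chain.cons hac (chain_snoc hcl (by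
      have : (a :: c :: l).getLast (List.cons_ne_nil a (c :: l)) =
          (c :: l).getLast (List.cons_ne_nil c l) := by
        rw [List.getLast_cons (List.cons_ne_nil c l)]
      rwa [this] at h))

/-- Lemma "dontcarebis": if the atom `G` attacks no variable of `X`, `r` is a repair
satisfying `q`, `A ∈ r` is a fact with `G`'s relation name relevant for `q` in `r`, and
`B` is key-equal to `A`, then every instantiation over `X` true in `(r \ {A}) ∪ {B}`
is true in `r`. -/
theorem dontcarebis (q : Finset Atom) (hq : SJF q) (X : Finset ℕ)
    (hX : X ⊆ q.sup atomVars) (G : Atom) (hG : G ∈ q)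
    (hnatt : ∀ x ∈ X, ¬ AttacksVar q G x)
    (r : Finset DBFact) (hr : ∃ db, Repair db r) (hrq : Sat0 r q)
    (A : DBFact) (hA : A ∈ r) (hArel : A.rel = G.rel) (hrel : Relevant A q r)
    (B : DBFact) (hkeq : keyEq A B) :
    ∀ ζ : ℕ → ℕ, Sat (insert B (r.erase A)) q X ζ → Sat r q X ζ := by
  classical
  rintro ζ ⟨θ, hθX, hθq⟩
  obtain ⟨db, hdb⟩ := hr
  have hcons : Consistent r := hdb.2.1
  by_cases hGB : applyVal θ G = B
  case neg =>
    refine ⟨θ, hθX, fun F hF => ?_⟩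
    rcases Finset.mem_insert.mp (hθq F hF) with h | h
    · exfalso
      have hrelF : F.rel = G.rel := by
        have h1 : (applyVal θ F).rel = F.rel := rfl
        rw [h] at h1
        rw [← h1, ← hkeq.1, hArel]
      have hFG : F = G := hq F hF G hG hrelF
      exact hGB (hFG ▸ h)
    · exact Finset.mem_of_mem_erase h
  case pos =>
    obtain ⟨ν, ⟨F0, hF0q, hF0A⟩, hνq⟩ := hrel
    have hF0G : F0 = G := by
      refine hq F0 hF0q G hG ?_
      have h1 : (applyVal ν F0).rel = F0.rel := rfl
      rw [hF0A] at h1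
      rw [← h1, hArel]
    rw [hF0G] at hF0A
    -- θ(F) ∈ r for every atom F ≠ G
    have hθr : ∀ F ∈ q, F ≠ G → applyVal θ F ∈ r := by
      intro F hF hFG
      rcases Finset.mem_insert.mp (hθq F hF) with h | h
      · exfalso
        have hrelF : F.rel = G.rel := by
          have h1 : (applyVal θ F).rel = F.rel := rfl
          rw [h] at h1
          rw [← h1, ← hkeq.1, hArel]
        exact hFG (hq F hF G hG hrelF)
      · exact Finset.mem_of_mem_erase h
    -- θ and ν agree on the key variables of G
    have hkey : ∀ v ∈ keyVars G, θ v = ν v := by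
      apply map_agree
      have h1 : G.key.map (Sum.elim θ id) = B.key := by
        have := congrArg DBFact.key hGB; exact this
      have h2 : G.key.map (Sum.elim ν id) = A.key := by
        have := congrArg DBFact.key hF0A; exact this
      rw [h1, h2, hkeq.2]
    -- θ and ν agree on G⁺
    have hplus : ∀ v ∈ plus q G, θ v = ν v := by
      intro v hv
      refine hv θ ν ?_ (fun w hw => hkey w hw) v rfl
      rintro p ⟨F, hFe, rfl⟩ hag
      have hFq := Finset.mem_of_mem_erase hFe
      have hFG : F ≠ G := Finset.ne_of_mem_erase hFe
      have h1 : applyVal θ F ∈ r := hθr F hFq hFG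
      have h2 : applyVal ν F ∈ r := hνq F hFq
      have hke : keyEq (applyVal θ F) (applyVal ν F) :=
        ⟨rfl, map_eq_of_agree (fun w hw => hag w hw)⟩
      have heq := hcons _ h1 _ h2 hke
      exact fun w hw => agree_of_applyVal_eq heq w hw
    -- the set of atoms reachable from G via attack steps
    set S : Atom → Prop := fun H => H ∈ q ∧ ∃ L : List Atom, (∀ A ∈ L, A ∈ q) ∧
      List.Chain (AttackStep q G) G L ∧
      (G :: L).getLast (List.cons_ne_nil G L) = H with hSdef
    have hSG : S G := ⟨hG, [], by simp, List.Chain.nil, rfl⟩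
    set VS : ℕ → Prop := fun v => ∃ H, S H ∧ v ∈ atomVars H with hVSdef
    set μ : ℕ → ℕ := fun v => if VS v then ν v else θ v with hμdef
    have hclosure : ∀ H ∈ q, ∀ v ∈ atomVars H, VS v → v ∉ plus q G → S H := by
      rintro H hHq v hvH ⟨H', ⟨hH'q, L, hLq, hch, hlast⟩, hvH'⟩ hvp
      refine ⟨hHq, L ++ [H], ?_, ?_, ?_⟩
      · intro C hC
        rcases List.mem_append.mp hC with h | h
        · exact hLq C h
        · simp only [List.mem_singleton] at h
          subst h; exact hHq
      · refine chain_snoc hch ?_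
        rw [hlast]
        intro hsub
        exact hvp (hsub (by
          simp only [Finset.coe_inter, Set.mem_inter_iff, Finset.mem_coe]
          exact ⟨hvH', hvH⟩))
      · simp [List.getLast_append]
    refine ⟨μ, ?_, ?_⟩
    · intro x hx
      by_cases hvx : VS x
      · obtain ⟨H, ⟨hHq, L, hLq, hch, hlast⟩, hxH⟩ := hvx
        by_cases hxp : x ∈ plus q G
        · have hμx : μ x = ν x := if_pos ⟨H, ⟨hHq, L, hLq, hch, hlast⟩, hxH⟩
          rw [hμx, ← hplus x hxp]
          exact hθX x hx
        · exact absurd ⟨hxp, hG, L, hLq, hch, by rw [hlast]; exact hxH⟩ (hnatt x hx)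
      · have hμx : μ x = θ x := if_neg hvx
        rw [hμx]; exact hθX x hx
    · intro F hF
      by_cases hSF : S F
      · have heq : applyVal μ F = applyVal ν F :=
          applyVal_eq_of_agree (fun v hv => if_pos ⟨F, hSF, hv⟩)
        rw [heq]; exact hνq F hF
      · have hFG : F ≠ G := fun h => hSF (h ▸ hSG)
        have heq : applyVal μ F = applyVal θ F := by
          refine applyVal_eq_of_agree (fun v hv => ?_)
          by_cases hvv : VS v
          · have hvp : v ∈ plus q G := by
              by_contra hvp
              exact hSF (hclosure F hF v hv hvv hvp)
            have : μ v = ν v := if_pos hvv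
            rw [this]; exact (hplus v hvp).symm
          · exact if_neg hvv
        rw [heq]; exact hθr F hF hFG
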